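/- Under the map π of the previous construction applied to every c''-colored face, the Z-type stabilizer B_f^Z of a c'-colored face f of the 2-colex maps to the face operator of the corresponding face τ(f) in the first surface code copy: π(B_f^Z) = product over edges e in the boundary of τ(f) of Z_e in copy 1. -/
import Mathlib


/-- Indicator vector in `F₂` of a finite set. -/
def indic {α : Type*} [DecidableEq α] (s : Finset α) : α → ZMod 2 :=
  fun x => if x ∈ s then 1 else 0

lemma indic_image_eq_sum {β : Type*} [DecidableEq β] {k : ℕ} (g : Fin k → β)
    (hg : Function.Injective g) :
    indic (Finset.image g Finset.univ) = ∑ i : Fin k, indic {g i} := by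
  funext x
  rw [Finset.sum_apply]
  by_cases hx : x ∈ Finset.image g Finset.univ
  · obtain ⟨i₀, -, rfl⟩ := Finset.mem_image.mp hx
    rw [Finset.sum_eq_single i₀]
    · simp [indic, hx]
    · intro j _ hj
      simp only [indic, Finset.mem_singleton]
      rw [if_neg]
      intro h
      exact hj (hg h.symm)
    · simp
  · rw [Finset.sum_eq_zero]
    · simp [indic, hx]
    · intro j _
      simp only [indic, Finset.mem_singleton]
      rw [if_neg]
      rintro rfl
      exact hx (Finset.mem_image_of_mem _ (Finset.mem_univ _))

theorem face_stabilizer_maps_to_plaquette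
    {V E : Type*} [Fintype V] [DecidableEq V] [Fintype E] [DecidableEq E]
    (k : ℕ) (u v : Fin k → V) (t : Fin k → E)
    (hinj : Function.Injective (Sum.elim u v))
    (ht : Function.Injective t)
    (f : Finset V)
    (hf : f = Finset.image u Finset.univ ∪ Finset.image v Finset.univ)
    (π : ((V → ZMod 2) × (V → ZMod 2)) →ₗ[ZMod 2]
        (((E → ZMod 2) × (E → ZMod 2)) × ((E → ZMod 2) × (E → ZMod 2))))
    (hhop : ∀ i : Fin k, π (0, indic {u i, v i}) = ((0, indic {t i}), 0)) :
    π (0, indic f) = ((0, indic (Finset.image t Finset.univ)), 0) := by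
  classical
  have hu : Function.Injective u := fun a b h => by
    have := hinj (show Sum.elim u v (.inl a) = Sum.elim u v (.inl b) from h)
    simpa using this
  have hv : Function.Injective v := fun a b h => by
    have := hinj (show Sum.elim u v (.inr a) = Sum.elim u v (.inr b) from h)
    simpa using this
  have huv : ∀ i j, u i ≠ v j := fun i j h => by
    have := hinj (show Sum.elim u v (.inl i) = Sum.elim u v (.inr j) from h)
    simp at this
  have hpair : ∀ i : Fin k, indic ({u i, v i} : Finset V) = indic {u i} + indic {v i} := by
    intro i
    funext x
    simp only [indic, Pi.add_apply, Finset.mem_insert, Finset.mem_singleton]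
    by_cases h1 : x = u i
    · subst h1
      rw [if_pos (Or.inl rfl), if_pos rfl, if_neg (huv i i)]; ring
    · by_cases h2 : x = v i
      · subst h2
        rw [if_pos (Or.inr rfl), if_neg h1, if_pos rfl]; ring
      · rw [if_neg (by tauto), if_neg h1, if_neg h2]; ring
  have hdisj : Disjoint (Finset.image u Finset.univ) (Finset.image v Finset.univ) := by
    rw [Finset.disjoint_left]
    rintro a ha hb
    obtain ⟨i, -, rfl⟩ := Finset.mem_image.mp ha
    obtain ⟨j, -, hj⟩ := Finset.mem_image.mp hb
    exact huv i j hj.symm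
  have hfsum : indic f = ∑ i : Fin k, indic ({u i, v i} : Finset V) := by
    have hsplit : indic f
        = indic (Finset.image u Finset.univ) + indic (Finset.image v Finset.univ) := by
      funext x
      simp only [hf, indic, Pi.add_apply, Finset.mem_union]
      by_cases h1 : x ∈ Finset.image u Finset.univ
      · rw [if_pos (Or.inl h1), if_pos h1,
          if_neg (fun h2 => Finset.disjoint_left.mp hdisj h1 h2)]; ring
      · by_cases h2 : x ∈ Finset.image v Finset.univ
        · rw [if_pos (Or.inr h2), if_neg h1, if_pos h2]; ring
        · rw [if_neg (by tauto), if_neg h1, if_neg h2]; ring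
    rw [hsplit, indic_image_eq_sum u hu, indic_image_eq_sum v hv, ← Finset.sum_add_distrib]
    exact Finset.sum_congr rfl fun i _ => (hpair i).symm
  have h1 : ((0 : V → ZMod 2), indic f)
      = ∑ i : Fin k, ((0 : V → ZMod 2), indic ({u i, v i} : Finset V)) := by
    rw [Prod.ext_iff]
    constructor
    · rw [Prod.fst_sum]; simp
    · rw [Prod.snd_sum, hfsum]
  rw [h1, map_sum]
  simp only [hhop]
  have h2 : (∑ i : Fin k, ((((0 : E → ZMod 2), indic ({t i} : Finset E)),
        (0 : (E → ZMod 2) × (E → ZMod 2)))))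
      = (((0 : E → ZMod 2), ∑ i : Fin k, indic ({t i} : Finset E)),
        (0 : (E → ZMod 2) × (E → ZMod 2))) := by
    rw [Prod.ext_iff, Prod.fst_sum, Prod.snd_sum, Prod.ext_iff, Prod.fst_sum, Prod.snd_sum]
    simp
  rw [h2, ← indic_image_eq_sum t ht]
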